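/- Let k be a field, V a finite-dimensional k-vector space, π : V* → V a skew-symmetric linear map, and ψ an alternating trilinear form on V. Fix a basis (e_i) of V with dual basis (ε^i) and define ξ ∈ V* by ξ(X) = Σ_i ψ(π ε^i, e_i, X). Then for every α ∈ V*: α(π ξ) = −Tr(Ψ_α), where Tr denotes the trace of the endomorphism Ψ_α of V*. In particular, the vector π ξ ∈ V is independent of the choice of basis. (This is the paper's Proposition stating that the vector field Y_{π,ψ} = π♯(i_π ψ) satisfies ⟨α, Y_{π,ψ}⟩ = ½ Tr Ψ_α, up to the paper's normalization of the interior product i_π ψ.) -/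

import Mathlib

/-- The linear form `ξ(X) = Σ_i ψ(π εⁱ, e_i, X)` associated to a basis `(e_i)` with dual
basis `(εⁱ)`; it is the contraction `i_π ψ` (up to normalization). -/
noncomputable def xiForm {k V ι : Type*} [Field k] [AddCommGroup V] [Module k V] [Fintype ι]
    (π : Module.Dual k V →ₗ[k] V) (ψ : V →ₗ[k] V →ₗ[k] V →ₗ[k] k)
    (b : Module.Basis ι k V) : Module.Dual k V :=
  ∑ i, ψ (π (b.coord i)) (b i)

/-- The endomorphism `Ψ_α` of `V*` defined by `(Ψ_α β)(X) = ψ(π α, π β, X)`. -/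
noncomputable def PsiEndo {k V : Type*} [Field k] [AddCommGroup V] [Module k V]
    (π : Module.Dual k V →ₗ[k] V) (ψ : V →ₗ[k] V →ₗ[k] V →ₗ[k] k)
    (α : Module.Dual k V) : Module.Dual k V →ₗ[k] Module.Dual k V :=
  (ψ (π α)) ∘ₗ π

lemma trace_eq_dual_aux {k V ι : Type*} [Field k] [AddCommGroup V] [Module k V] [Fintype ι]
    (b : Module.Basis ι k V) (f : Module.Dual k V →ₗ[k] Module.Dual k V) :
    LinearMap.trace k (Module.Dual k V) f = ∑ i, f (b.coord i) (b i) := by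
  classical
  rw [LinearMap.trace_eq_matrix_trace k b.dualBasis, Matrix.trace]
  simp [LinearMap.toMatrix_apply, Module.Basis.dualBasis_repr, Matrix.diag]

lemma cyc_aux {k V : Type*} [Field k] [AddCommGroup V] [Module k V]
    (ψ : V →ₗ[k] V →ₗ[k] V →ₗ[k] k)
    (hψ₁ : ∀ X Y : V, ψ X X Y = 0)
    (hψ₂ : ∀ X Y : V, ψ X Y Y = 0)
    (hψ₃ : ∀ X Y : V, ψ X Y X = 0)
    (x y z : V) : ψ x y z = ψ z x y := by
  have h13 : ∀ a b c : V, ψ a b c = - ψ c b a := by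
    intro a b c
    have := hψ₃ (a + c) b
    simp only [map_add, LinearMap.add_apply, hψ₃] at this
    linear_combination this
  have h12 : ∀ a b c : V, ψ a b c = - ψ b a c := by
    intro a b c
    have := hψ₁ (a + b) c
    simp only [map_add, LinearMap.add_apply, hψ₁] at this
    linear_combination this
  rw [h13 z x y, h12 y x z, neg_neg]

lemma key_aux {k V ι : Type*} [Field k] [AddCommGroup V] [Module k V] [Fintype ι]
    (π : Module.Dual k V →ₗ[k] V)
    (hπ : ∀ α β : Module.Dual k V, α (π β) = - β (π α))
    (ψ : V →ₗ[k] V →ₗ[k] V →ₗ[k] k)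
    (hψ₁ : ∀ X Y : V, ψ X X Y = 0)
    (hψ₂ : ∀ X Y : V, ψ X Y Y = 0)
    (hψ₃ : ∀ X Y : V, ψ X Y X = 0)
    (b : Module.Basis ι k V) (α : Module.Dual k V) :
    α (π (xiForm π ψ b)) = - LinearMap.trace k (Module.Dual k V) (PsiEndo π ψ α) := by
  rw [hπ α (xiForm π ψ b), trace_eq_dual_aux b]
  congr 1
  unfold xiForm PsiEndo
  rw [LinearMap.sum_apply]
  refine Finset.sum_congr rfl fun i _ => ?_
  exact cyc_aux ψ hψ₁ hψ₂ hψ₃ (π (b.coord i)) (b i) (π α)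

/-- For a skew-symmetric `π : V* → V` and an alternating trilinear form `ψ` on a
finite-dimensional space, `α(π ξ) = −Tr(Ψ_α)` for every `α`; in particular the vector
`π ξ` is independent of the choice of basis. -/
theorem pairing_with_Y_eq_neg_trace {k V ι : Type*} [Field k] [AddCommGroup V] [Module k V]
    [Fintype ι]
    (π : Module.Dual k V →ₗ[k] V)
    (hπ : ∀ α β : Module.Dual k V, α (π β) = - β (π α))
    (ψ : V →ₗ[k] V →ₗ[k] V →ₗ[k] k)
    (hψ₁ : ∀ X Y : V, ψ X X Y = 0)
    (hψ₂ : ∀ X Y : V, ψ X Y Y = 0)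
    (hψ₃ : ∀ X Y : V, ψ X Y X = 0)
    (b : Module.Basis ι k V) :
    (∀ α : Module.Dual k V,
        α (π (xiForm π ψ b))
          = - LinearMap.trace k (Module.Dual k V) (PsiEndo π ψ α))
    ∧ (∀ (ι' : Type) [Fintype ι'], ∀ b' : Module.Basis ι' k V,
        π (xiForm π ψ b) = π (xiForm π ψ b')) := by
  refine ⟨key_aux π hπ ψ hψ₁ hψ₂ hψ₃ b, ?_⟩
  intro ι' _ b'
  apply b.ext_elem
  intro i
  have h1 := key_aux π hπ ψ hψ₁ hψ₂ hψ₃ b (b.coord i)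
  have h2 := key_aux π hπ ψ hψ₁ hψ₂ hψ₃ b' (b.coord i)
  simpa [Module.Basis.coord_apply] using h1.trans h2.symm
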